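/- Let ψ : ℕ → (ℝ → ℝ) be functions with ‖ψ_k‖_∞ ≤ Ψ₀ and ‖ψ_k'‖_∞ ≤ Ψ₁ · k^δ for all k ≥ 1 (some constants Ψ₀, Ψ₁, δ ≥ 0), and suppose each ψ_k is continuously differentiable and ∫₀¹ ψ_k ψ_ℓ = δ_{kℓ}. Then for every λ > 1 + 2δ there is a constant C such that for all n, p and all k, ℓ ≤ p, |∑_{j=1}^n ψ_k(j/n) ψ_ℓ(j/n) − n·δ_{kℓ}| ≤ C · (k^λ + ℓ^λ)/2. In particular, for any u ∈ ℝ^p, |uᵀ(Ψ − n I)u| ≤ C ∑_k k^λ u_k², where Ψ_{kℓ} = ∑_j ψ_k(j/n)ψ_ℓ(j/n). -/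

import Mathlib

open MeasureTheory

lemma lip_of_deriv (f : ℝ → ℝ) (hf : ContDiff ℝ 1 f) (L : ℝ) (hL : 0 ≤ L)
    (hd : ∀ x, |deriv f x| ≤ L) : ∀ x y : ℝ, |f x - f y| ≤ L * |x - y| := by
  have hdiff : Differentiable ℝ f := hf.differentiable one_ne_zero
  have hlip : LipschitzWith L.toNNReal f := by
    apply lipschitzWith_of_nnnorm_deriv_le hdiff
    intro x
    rw [← NNReal.coe_le_coe, coe_nnnorm, Real.norm_eq_abs, Real.coe_toNNReal _ hL]
    exact hd x
  intro x y
  have h := hlip.dist_le_mul x y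
  rwa [Real.dist_eq, Real.dist_eq, Real.coe_toNNReal _ hL] at h

lemma summable_shift (e : ℝ) (he : e < -1) :
    Summable (fun m : ℕ => ((m:ℝ)+1) ^ e) := by
  have h1 : Summable (fun n : ℕ => (n:ℝ) ^ e) := Real.summable_nat_rpow.mpr he
  have h2 := (summable_nat_add_iff 1).mpr h1
  convert h2 using 2 with m
  · rfl
  · push_cast
    ring_nf

lemma riemann_bound (f : ℝ → ℝ) (hc : Continuous f) (L : ℝ) (hL : 0 ≤ L)
    (hlip : ∀ x y : ℝ, |f x - f y| ≤ L * |x - y|) (n : ℕ) (hn : 1 ≤ n) :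
    |(∑ j ∈ Finset.Icc 1 n, f ((j:ℝ)/n)) - (n:ℝ) * ∫ x in (0:ℝ)..1, f x| ≤ L := by
  have hn0 : (0:ℝ) < n := by exact_mod_cast Nat.pos_of_ne_zero (by omega)
  set a : ℕ → ℝ := fun i => (i:ℝ) / n with ha
  have hsplit : ∑ i ∈ Finset.range n, ∫ x in a i..a (i+1), f x = ∫ x in (a 0)..(a n), f x :=
    intervalIntegral.sum_integral_adjacent_intervals (fun i _ => hc.intervalIntegrable _ _)
  have ha0 : a 0 = 0 := by simp [ha]
  have han : a n = 1 := by rw [ha]; exact div_self hn0.ne'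
  rw [ha0, han] at hsplit
  have hIcc : ∑ j ∈ Finset.Icc 1 n, f ((j:ℝ)/n) = ∑ i ∈ Finset.range n, f (a (i+1)) := by
    rw [← Finset.Ico_add_one_right_eq_Icc, Finset.sum_Ico_eq_sum_range]
    simp [ha, add_comm]
  rw [hIcc, ← hsplit, Finset.mul_sum, ← Finset.sum_sub_distrib]
  refine le_trans (Finset.abs_sum_le_sum_abs _ _) ?_
  have hterm : ∀ i ∈ Finset.range n, |f (a (i+1)) - (n:ℝ) * ∫ x in a i..a (i+1), f x| ≤ L / n := by
    intro i _
    have hlen : a (i+1) - a i = 1 / n := by simp only [ha]; field_simp; push_cast; ring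
    have hconst : (∫ _x in a i..a (i+1), f (a (i+1))) = (1/n) * f (a (i+1)) := by
      rw [intervalIntegral.integral_const, hlen, smul_eq_mul]
    have heq : f (a (i+1)) - (n:ℝ) * ∫ x in a i..a (i+1), f x
        = (n:ℝ) * ∫ x in a i..a (i+1), (f (a (i+1)) - f x) := by
      rw [intervalIntegral.integral_sub (intervalIntegrable_const) (hc.intervalIntegrable _ _),
        hconst]
      field_simp
    rw [heq, abs_mul, abs_of_pos hn0]
    have hbound : |∫ x in a i..a (i+1), (f (a (i+1)) - f x)| ≤ (L/n) * |a (i+1) - a i| := by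
      rw [← Real.norm_eq_abs]
      apply intervalIntegral.norm_integral_le_of_norm_le_const
      intro x hx
      have hle : a i ≤ a (i+1) :=
        (div_le_div_iff_of_pos_right hn0).mpr (by exact_mod_cast Nat.le_succ i)
      rw [Set.uIoc_of_le hle] at hx
      have h1 : |a (i+1) - x| ≤ 1/n := by
        rw [abs_of_nonneg (by linarith [hx.2])]
        linarith [hx.1, hlen]
      calc ‖f (a (i+1)) - f x‖ = |f (a (i+1)) - f x| := rfl
        _ ≤ L * |a (i+1) - x| := hlip _ _
        _ ≤ L * (1/n) := mul_le_mul_of_nonneg_left h1 hL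
        _ = L / n := by ring
    rw [hlen] at hbound
    calc (n:ℝ) * |∫ x in a i..a (i+1), (f (a (i+1)) - f x)| ≤ (n:ℝ) * ((L/n) * |1/(n:ℝ)|) :=
          mul_le_mul_of_nonneg_left hbound (le_of_lt hn0)
      _ = L / n := by rw [abs_of_pos (by positivity : (0:ℝ) < 1/n)]; field_simp
  refine le_trans (Finset.sum_le_sum hterm) ?_
  rw [Finset.sum_const, Finset.card_range, nsmul_eq_mul]
  exact le_of_eq (by field_simp)

/-- near-orthogonality of the discretized basis (Lemma on Riemann sums). -/
theorem near_orthogonal_discretized_basis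
    (ψ : ℕ → ℝ → ℝ) (Ψ₀ Ψ₁ δ : ℝ) (hΨ₀ : 0 ≤ Ψ₀) (hΨ₁ : 0 ≤ Ψ₁) (hδ : 0 ≤ δ)
    (hC1 : ∀ k : ℕ, 1 ≤ k → ContDiff ℝ 1 (ψ k))
    (hbdd : ∀ k : ℕ, 1 ≤ k → ∀ x : ℝ, |ψ k x| ≤ Ψ₀)
    (hder : ∀ k : ℕ, 1 ≤ k → ∀ x : ℝ, |deriv (ψ k) x| ≤ Ψ₁ * (k:ℝ) ^ δ)
    (hortho : ∀ k ℓ : ℕ, 1 ≤ k → 1 ≤ ℓ →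
      (∫ x in (0:ℝ)..1, ψ k x * ψ ℓ x) = if k = ℓ then 1 else 0) :
    ∀ lam : ℝ, 1 + 2 * δ < lam →
      ∃ C : ℝ, 0 < C ∧
        (∀ n p k ℓ : ℕ, 1 ≤ n → 1 ≤ k → k ≤ p → 1 ≤ ℓ → ℓ ≤ p →
          |(∑ j ∈ Finset.Icc 1 n, ψ k ((j:ℝ)/n) * ψ ℓ ((j:ℝ)/n))
              - (n:ℝ) * (if k = ℓ then 1 else 0)|
            ≤ C * ((k:ℝ) ^ lam + (ℓ:ℝ) ^ lam) / 2) ∧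
        (∀ n p : ℕ, 1 ≤ n → ∀ u : Fin p → ℝ,
          |∑ k : Fin p, ∑ ℓ : Fin p, u k * u ℓ *
              ((∑ j ∈ Finset.Icc 1 n, ψ (k+1) ((j:ℝ)/n) * ψ (ℓ+1) ((j:ℝ)/n))
                - (n:ℝ) * (if (k:ℕ) = (ℓ:ℕ) then 1 else 0))|
            ≤ C * ∑ k : Fin p, ((k:ℝ)+1) ^ lam * (u k) ^ 2) := by
  intro lam hlam
  set M : ℝ := Ψ₀ * Ψ₁ with hMdef
  have hM0 : 0 ≤ M := mul_nonneg hΨ₀ hΨ₁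
  have hsummable : Summable (fun m : ℕ => ((m:ℝ)+1) ^ (2*δ - lam)) :=
    summable_shift _ (by linarith)
  set S : ℝ := ∑' m : ℕ, ((m:ℝ)+1) ^ (2*δ - lam) with hSdef
  have hS0 : 0 ≤ S := tsum_nonneg (fun m => Real.rpow_nonneg (by positivity) _)
  set C : ℝ := 2*M*(S+1) + 1 with hCdef
  have hC0 : 0 < C := by positivity
  -- the core estimate
  have key : ∀ n k ℓ : ℕ, 1 ≤ n → 1 ≤ k → 1 ≤ ℓ →
      |(∑ j ∈ Finset.Icc 1 n, ψ k ((j:ℝ)/n) * ψ ℓ ((j:ℝ)/n)) - (n:ℝ) * (if k = ℓ then 1 else 0)|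
        ≤ M * ((k:ℝ)^δ + (ℓ:ℝ)^δ) := by
    intro n k ℓ hn hk hℓ
    have hck := (hC1 k hk).continuous
    have hcℓ := (hC1 ℓ hℓ).continuous
    have hcont : Continuous (fun x => ψ k x * ψ ℓ x) := hck.mul hcℓ
    have hkd0 : (0:ℝ) ≤ (k:ℝ)^δ := Real.rpow_nonneg (by positivity) _
    have hℓd0 : (0:ℝ) ≤ (ℓ:ℝ)^δ := Real.rpow_nonneg (by positivity) _
    have lipk := lip_of_deriv (ψ k) (hC1 k hk) (Ψ₁ * (k:ℝ)^δ) (by positivity) (hder k hk)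
    have lipℓ := lip_of_deriv (ψ ℓ) (hC1 ℓ hℓ) (Ψ₁ * (ℓ:ℝ)^δ) (by positivity) (hder ℓ hℓ)
    have hlip : ∀ x y : ℝ, |ψ k x * ψ ℓ x - ψ k y * ψ ℓ y|
        ≤ (M * ((k:ℝ)^δ + (ℓ:ℝ)^δ)) * |x - y| := by
      intro x y
      have hsplit : ψ k x * ψ ℓ x - ψ k y * ψ ℓ y
          = ψ k x * (ψ ℓ x - ψ ℓ y) + ψ ℓ y * (ψ k x - ψ k y) := by ring
      rw [hsplit]
      have h1 : |ψ k x * (ψ ℓ x - ψ ℓ y)| ≤ Ψ₀ * (Ψ₁ * (ℓ:ℝ)^δ * |x - y|) := by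
        rw [abs_mul]
        exact mul_le_mul (hbdd k hk x) (lipℓ x y) (abs_nonneg _) hΨ₀
      have h2 : |ψ ℓ y * (ψ k x - ψ k y)| ≤ Ψ₀ * (Ψ₁ * (k:ℝ)^δ * |x - y|) := by
        rw [abs_mul]
        exact mul_le_mul (hbdd ℓ hℓ y) (lipk x y) (abs_nonneg _) hΨ₀
      calc |ψ k x * (ψ ℓ x - ψ ℓ y) + ψ ℓ y * (ψ k x - ψ k y)|
          ≤ |ψ k x * (ψ ℓ x - ψ ℓ y)| + |ψ ℓ y * (ψ k x - ψ k y)| := abs_add_le _ _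
        _ ≤ Ψ₀ * (Ψ₁ * (ℓ:ℝ)^δ * |x - y|) + Ψ₀ * (Ψ₁ * (k:ℝ)^δ * |x - y|) := add_le_add h1 h2
        _ = (M * ((k:ℝ)^δ + (ℓ:ℝ)^δ)) * |x - y| := by rw [hMdef]; ring
    have hrb := riemann_bound (fun x => ψ k x * ψ ℓ x) hcont
      (M * ((k:ℝ)^δ + (ℓ:ℝ)^δ)) (by positivity) hlip n hn
    rwa [hortho k ℓ hk hℓ] at hrb
  refine ⟨C, hC0, ?_, ?_⟩
  · -- Part 1
    intro n p k ℓ hn hk _ hℓ _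
    refine (key n k ℓ hn hk hℓ).trans ?_
    have hk1 : (1:ℝ) ≤ (k:ℝ) := by exact_mod_cast hk
    have hℓ1 : (1:ℝ) ≤ (ℓ:ℝ) := by exact_mod_cast hℓ
    have h1 : (k:ℝ)^δ ≤ (k:ℝ)^lam := Real.rpow_le_rpow_of_exponent_le hk1 (by linarith)
    have h2 : (ℓ:ℝ)^δ ≤ (ℓ:ℝ)^lam := Real.rpow_le_rpow_of_exponent_le hℓ1 (by linarith)
    have hkl0 : (0:ℝ) ≤ (k:ℝ)^lam := Real.rpow_nonneg (by positivity) _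
    have hll0 : (0:ℝ) ≤ (ℓ:ℝ)^lam := Real.rpow_nonneg (by positivity) _
    have step1 : M * ((k:ℝ)^δ + (ℓ:ℝ)^δ) ≤ M * ((k:ℝ)^lam + (ℓ:ℝ)^lam) :=
      mul_le_mul_of_nonneg_left (add_le_add h1 h2) hM0
    refine step1.trans ?_
    rw [hCdef]
    nlinarith [mul_nonneg (mul_nonneg hM0 hS0) (add_nonneg hkl0 hll0),
      add_nonneg hkl0 hll0]
  · -- Part 2
    intro n p hn u
    set a : Fin p → ℝ := fun k => ((k:ℝ)+1)^δ * |u k| with hadef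
    have ha0 : ∀ k, 0 ≤ a k := fun k => mul_nonneg (Real.rpow_nonneg (by positivity) _) (abs_nonneg _)
    have hcast : ∀ k : Fin p, ((k:ℝ)+1) = (((k:ℕ)+1 : ℕ) : ℝ) := by intro k; push_cast; ring
    -- pointwise bound
    have hpt : ∀ k ℓ : Fin p, |u k * u ℓ *
        ((∑ j ∈ Finset.Icc 1 n, ψ (k+1) ((j:ℝ)/n) * ψ (ℓ+1) ((j:ℝ)/n))
          - (n:ℝ) * (if (k:ℕ) = (ℓ:ℕ) then 1 else 0))| ≤ 2*M * (a k * a ℓ) := by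
      intro k ℓ
      have hkey := key n ((k:ℕ)+1) ((ℓ:ℕ)+1) hn (Nat.le_add_left 1 _) (Nat.le_add_left 1 _)
      have hifeq : (if (k:ℕ)+1 = (ℓ:ℕ)+1 then (1:ℝ) else 0) = (if (k:ℕ) = (ℓ:ℕ) then (1:ℝ) else 0) := by
        simp
      rw [hifeq] at hkey
      have hk1 : (1:ℝ) ≤ ((k:ℝ)+1) := le_add_of_nonneg_left (Nat.cast_nonneg _)
      have hℓ1 : (1:ℝ) ≤ ((ℓ:ℝ)+1) := le_add_of_nonneg_left (Nat.cast_nonneg _)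
      have hk1' : (1:ℝ) ≤ ((k:ℝ)+1)^δ := Real.one_le_rpow hk1 hδ
      have hℓ1' : (1:ℝ) ≤ ((ℓ:ℝ)+1)^δ := Real.one_le_rpow hℓ1 hδ
      have hE : |(∑ j ∈ Finset.Icc 1 n, ψ (k+1) ((j:ℝ)/n) * ψ (ℓ+1) ((j:ℝ)/n))
          - (n:ℝ) * (if (k:ℕ) = (ℓ:ℕ) then 1 else 0)|
            ≤ 2*M * (((k:ℝ)+1)^δ * (((ℓ:ℝ)+1)^δ)) := by
        rw [hcast k, hcast ℓ] at *
        refine hkey.trans ?_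
        nlinarith [mul_nonneg hM0 (sub_nonneg.mpr hk1'), mul_nonneg hM0 (sub_nonneg.mpr hℓ1'),
          hk1', hℓ1']
      rw [abs_mul, abs_mul]
      calc |u k| * |u ℓ| * |(∑ j ∈ Finset.Icc 1 n, ψ (k+1) ((j:ℝ)/n) * ψ (ℓ+1) ((j:ℝ)/n))
            - (n:ℝ) * (if (k:ℕ) = (ℓ:ℕ) then 1 else 0)|
          ≤ |u k| * |u ℓ| * (2*M * (((k:ℝ)+1)^δ * (((ℓ:ℝ)+1)^δ))) :=
            mul_le_mul_of_nonneg_left hE (by positivity)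
        _ = 2*M * (a k * a ℓ) := by rw [hadef]; ring
    -- sum bound
    have hsum1 : |∑ k : Fin p, ∑ ℓ : Fin p, u k * u ℓ *
        ((∑ j ∈ Finset.Icc 1 n, ψ (k+1) ((j:ℝ)/n) * ψ (ℓ+1) ((j:ℝ)/n))
          - (n:ℝ) * (if (k:ℕ) = (ℓ:ℕ) then 1 else 0))|
        ≤ 2*M * (∑ k : Fin p, a k)^2 := by
      calc |∑ k : Fin p, ∑ ℓ : Fin p, u k * u ℓ *
          ((∑ j ∈ Finset.Icc 1 n, ψ (k+1) ((j:ℝ)/n) * ψ (ℓ+1) ((j:ℝ)/n))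
            - (n:ℝ) * (if (k:ℕ) = (ℓ:ℕ) then 1 else 0))|
          ≤ ∑ k : Fin p, |∑ ℓ : Fin p, u k * u ℓ *
            ((∑ j ∈ Finset.Icc 1 n, ψ (k+1) ((j:ℝ)/n) * ψ (ℓ+1) ((j:ℝ)/n))
              - (n:ℝ) * (if (k:ℕ) = (ℓ:ℕ) then 1 else 0))| := Finset.abs_sum_le_sum_abs _ _
        _ ≤ ∑ k : Fin p, ∑ ℓ : Fin p, 2*M * (a k * a ℓ) := by
            refine Finset.sum_le_sum (fun k _ => ?_)
            refine (Finset.abs_sum_le_sum_abs _ _).trans ?_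
            exact Finset.sum_le_sum (fun ℓ _ => hpt k ℓ)
        _ = 2*M * (∑ k : Fin p, a k)^2 := by
            rw [sq, Finset.sum_mul_sum]
            rw [Finset.mul_sum]
            refine Finset.sum_congr rfl (fun k _ => ?_)
            rw [Finset.mul_sum]
    -- Cauchy-Schwarz
    have hCS : (∑ k : Fin p, a k)^2 ≤ S * ∑ k : Fin p, ((k:ℝ)+1)^lam * (u k)^2 := by
      have hsplit : ∀ k : Fin p, a k = (((k:ℝ)+1)^(δ - lam/2)) * ((((k:ℝ)+1)^(lam/2)) * |u k|) := by
        intro k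
        rw [hadef]
        have hpos : (0:ℝ) < (k:ℝ)+1 := by positivity
        rw [← mul_assoc, ← Real.rpow_add hpos]
        ring_nf
      have hcs := Finset.sum_mul_sq_le_sq_mul_sq Finset.univ
        (fun k : Fin p => ((k:ℝ)+1)^(δ - lam/2)) (fun k : Fin p => (((k:ℝ)+1)^(lam/2)) * |u k|)
      have e1 : (∑ k : Fin p, a k)^2 = (∑ k : Fin p, (((k:ℝ)+1)^(δ - lam/2)) *
          ((((k:ℝ)+1)^(lam/2)) * |u k|))^2 := by
        congr 1; exact Finset.sum_congr rfl (fun k _ => hsplit k)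
      have e2 : ∀ k : Fin p, (((k:ℝ)+1)^(δ - lam/2))^2 = ((k:ℝ)+1)^(2*δ - lam) := by
        intro k
        have hpos : (0:ℝ) < (k:ℝ)+1 := by positivity
        rw [sq, ← Real.rpow_add hpos]
        ring_nf
      have e3 : ∀ k : Fin p, ((((k:ℝ)+1)^(lam/2)) * |u k|)^2 = ((k:ℝ)+1)^lam * (u k)^2 := by
        intro k
        have hpos : (0:ℝ) < (k:ℝ)+1 := by positivity
        rw [mul_pow, sq_abs, sq, ← Real.rpow_add hpos]
        ring_nf
      have e4 : ∑ k : Fin p, (((k:ℝ)+1)^(δ - lam/2))^2 ≤ S := by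
        have := Finset.sum_congr rfl (fun k (_ : k ∈ (Finset.univ : Finset (Fin p))) => e2 k)
        rw [this]
        have hr : ∑ k : Fin p, ((k:ℝ)+1)^(2*δ - lam)
            = ∑ m ∈ Finset.range p, ((m:ℝ)+1)^(2*δ - lam) := by
          rw [Finset.sum_range fun m => ((m:ℝ)+1)^(2*δ - lam)]
        rw [hr, hSdef]
        exact Summable.sum_le_tsum _ (fun m _ => Real.rpow_nonneg (by positivity) _) hsummable
      have e5 : ∑ k : Fin p, ((((k:ℝ)+1)^(lam/2)) * |u k|)^2
          = ∑ k : Fin p, ((k:ℝ)+1)^lam * (u k)^2 :=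
        Finset.sum_congr rfl (fun k _ => e3 k)
      rw [e1]
      refine hcs.trans ?_
      rw [e5]
      have hT0 : 0 ≤ ∑ k : Fin p, ((k:ℝ)+1)^lam * (u k)^2 :=
        Finset.sum_nonneg (fun k _ => mul_nonneg (Real.rpow_nonneg (by positivity) _) (sq_nonneg _))
      exact mul_le_mul_of_nonneg_right e4 hT0
    have hT0 : 0 ≤ ∑ k : Fin p, ((k:ℝ)+1)^lam * (u k)^2 :=
      Finset.sum_nonneg (fun k _ => mul_nonneg (Real.rpow_nonneg (by positivity) _) (sq_nonneg _))
    refine hsum1.trans ?_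
    calc 2*M * (∑ k : Fin p, a k)^2 ≤ 2*M * (S * ∑ k : Fin p, ((k:ℝ)+1)^lam * (u k)^2) :=
          mul_le_mul_of_nonneg_left hCS (by positivity)
      _ ≤ C * ∑ k : Fin p, ((k:ℝ)+1)^lam * (u k)^2 := by
          rw [hCdef]
          nlinarith [hT0, hM0, mul_nonneg (mul_nonneg hM0 hS0) hT0, mul_nonneg hM0 hT0]
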